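/- Let G be a connected triangle-free graph having exactly one hole H. Then for every edge e of G, the competition number of G − e satisfies k(G − e) ≤ 1. -/

import Mathlib

open SimpleGraph

/-- A hole of a graph: a chordless (induced) cycle of length at least 4. -/
def SimpleGraph.IsHole {V : Type*} (G : SimpleGraph V) {v : V} (c : G.Walk v v) : Prop :=
  c.IsCycle ∧ 4 ≤ c.length ∧
    ∀ x y, x ∈ c.support → y ∈ c.support → G.Adj x y → s(x, y) ∈ c.edges

/-- The set of edge sets of holes of `G`; its cardinality is the number of holes of `G`. -/
def SimpleGraph.holeEdgeSets {V : Type*} (G : SimpleGraph V) : Set (Set (Sym2 V)) :=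
  {E | ∃ (v : V) (c : G.Walk v v), G.IsHole c ∧ E = {e | e ∈ c.edges}}

/-- All holes of `G` are pairwise edge-disjoint: two holes either have the same edge set
or share no edge. -/
def SimpleGraph.HolesEdgeDisjoint {V : Type*} (G : SimpleGraph V) : Prop :=
  ∀ ⦃u v : V⦄ (c₁ : G.Walk u u) (c₂ : G.Walk v v), G.IsHole c₁ → G.IsHole c₂ →
    (∀ e, e ∈ c₁.edges ↔ e ∈ c₂.edges) ∨ (∀ e, e ∈ c₁.edges → e ∉ c₂.edges)

/-- A maximal clique of `G` (as a vertex set). -/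
def SimpleGraph.IsMaxClique {V : Type*} (G : SimpleGraph V) (K : Set V) : Prop :=
  G.IsClique K ∧ ∀ K', G.IsClique K' → K ⊆ K' → K' = K

/-- A non-edge maximal clique: a maximal clique with at least 3 vertices. -/
def SimpleGraph.IsNonEdgeMaxClique {V : Type*} (G : SimpleGraph V) (K : Set V) : Prop :=
  G.IsMaxClique K ∧ 3 ≤ K.ncard

/-- The clique number of `G`. -/
noncomputable def SimpleGraph.cliqueNumber {V : Type*} (G : SimpleGraph V) : ℕ :=
  sSup {n | ∃ s : Finset V, G.IsNClique n s}

/-- A `K`-avoiding path: a path which is not an edge of the clique `K` and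
whose internal vertices all avoid `K`. -/
def SimpleGraph.IsKAvoidingPath {V : Type*} (G : SimpleGraph V) (K : Set V)
    {a b : V} (p : G.Walk a b) : Prop :=
  p.IsPath ∧ ¬(p.length = 1 ∧ a ∈ K ∧ b ∈ K) ∧
    ∀ w ∈ p.support, w = a ∨ w = b ∨ w ∉ K

/-- The competition graph of a digraph given by its arc relation `D`. -/
def competitionGraph {V : Type*} (D : V → V → Prop) : SimpleGraph V where
  Adj x y := x ≠ y ∧ ∃ v, D x v ∧ D y v
  symm := by
    constructor
    rintro x y ⟨hxy, v, hx, hy⟩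
    exact ⟨hxy.symm, v, hy, hx⟩
  loopless := by
    constructor
    rintro x ⟨hxx, -⟩
    exact hxx rfl

/-- A digraph is acyclic if it has no directed cycle. -/
def DigraphAcyclic {V : Type*} (D : V → V → Prop) : Prop :=
  ∀ x, ¬ Relation.TransGen D x x

/-- `G` together with `k` added isolated vertices. -/
def SimpleGraph.addIsolated {V : Type*} (G : SimpleGraph V) (k : ℕ) :
    SimpleGraph (V ⊕ Fin k) where
  Adj a b := ∃ x y, G.Adj x y ∧ a = Sum.inl x ∧ b = Sum.inl y
  symm := by
    constructor
    rintro a b ⟨x, y, h, rfl, rfl⟩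
    exact ⟨y, x, h.symm, rfl, rfl⟩
  loopless := by
    constructor
    rintro a ⟨x, y, h, rfl, hxy⟩
    exact h.ne (Sum.inl.inj hxy)

/-- The competition number of `G`: the least `k` such that `G` plus `k` isolated
vertices is the competition graph of an acyclic digraph. -/
noncomputable def competitionNumber {V : Type*} (G : SimpleGraph V) : ℕ :=
  sInf {k | ∃ D : (V ⊕ Fin k) → (V ⊕ Fin k) → Prop,
    DigraphAcyclic D ∧ competitionGraph D = G.addIsolated k}

section Acyclic

variable {V : Type*} {F : SimpleGraph V}

lemma walk_length_pos {u v : V} (p : F.Walk u v) (h : u ≠ v) : 0 < p.length := by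
  cases p with
  | nil => exact absurd rfl h
  | cons h' q => simp

/-- In an acyclic graph, every path between two vertices realizes the distance. -/
lemma length_eq_dist_of_acyclic (hF : F.IsAcyclic) {r v : V} {p : F.Walk r v}
    (hp : p.IsPath) : p.length = F.dist r v := by
  obtain ⟨q, hq, hql⟩ := (Reachable.exists_path_of_dist ⟨p⟩ : ∃ q : F.Walk r v, _)
  have := hF.path_unique ⟨p, hp⟩ ⟨q, hq⟩
  rw [show p = q from congrArg Subtype.val this, hql]

/-- In an acyclic graph, adjacent vertices have different distances to any root. -/
lemma dist_ne_of_adj_of_acyclic (hF : F.IsAcyclic) {r u v : V} (h : F.Adj u v)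
    (hr : F.Reachable r u) : F.dist r u ≠ F.dist r v := by
  classical
  obtain ⟨p, hp, hpl⟩ := hr.exists_path_of_dist
  by_cases hv : v ∈ p.support
  · -- dist r v < dist r u
    have htake : (p.takeUntil v hv).length = F.dist r v :=
      length_eq_dist_of_acyclic hF (hp.takeUntil hv)
    have hsplit := congrArg Walk.length (p.take_spec hv)
    rw [Walk.length_append] at hsplit
    have hdrop : 0 < (p.dropUntil v hv).length :=
      walk_length_pos _ (fun hvu => h.ne (hvu.symm))
    omega
  · -- dist r v = dist r u + 1
    have hq : (Walk.cons h.symm p.reverse).IsPath := by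
      rw [Walk.cons_isPath_iff]
      exact ⟨hp.reverse, by rwa [Walk.support_reverse, List.mem_reverse]⟩
    have := length_eq_dist_of_acyclic hF hq
    rw [Walk.length_cons, Walk.length_reverse] at this
    rw [dist_comm (u := r) (v := v), ← this, hpl]
    omega

/-- In an acyclic graph, a vertex has at most one neighbor strictly closer to a root. -/
lemma parent_unique_of_acyclic (hF : F.IsAcyclic) {r v u₁ u₂ : V}
    (h₁ : F.Adj u₁ v) (h₂ : F.Adj u₂ v)
    (hr₁ : F.Reachable r u₁) (hr₂ : F.Reachable r u₂)
    (hd₁ : F.dist r u₁ < F.dist r v) (hd₂ : F.dist r u₂ < F.dist r v) : u₁ = u₂ := by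
  classical
  obtain ⟨p₁, hp₁, hpl₁⟩ := hr₁.exists_path_of_dist
  obtain ⟨p₂, hp₂, hpl₂⟩ := hr₂.exists_path_of_dist
  have hv₁ : v ∉ p₁.support := by
    intro hv
    have : F.dist r v ≤ (p₁.takeUntil v hv).length := F.dist_le _
    have := p₁.length_takeUntil_le hv
    omega
  have hv₂ : v ∉ p₂.support := by
    intro hv
    have : F.dist r v ≤ (p₂.takeUntil v hv).length := F.dist_le _
    have := p₂.length_takeUntil_le hv
    omega
  have hq₁ : (Walk.cons h₁.symm p₁.reverse).IsPath := by
    rw [Walk.cons_isPath_iff]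
    exact ⟨hp₁.reverse, by rwa [Walk.support_reverse, List.mem_reverse]⟩
  have hq₂ : (Walk.cons h₂.symm p₂.reverse).IsPath := by
    rw [Walk.cons_isPath_iff]
    exact ⟨hp₂.reverse, by rwa [Walk.support_reverse, List.mem_reverse]⟩
  have := hF.path_unique ⟨_, hq₁⟩ ⟨_, hq₂⟩
  have hwalk : (Walk.cons h₁.symm p₁.reverse) = (Walk.cons h₂.symm p₂.reverse) :=
    congrArg Subtype.val this
  have hedges := congrArg Walk.edges hwalk
  rw [Walk.edges_cons, Walk.edges_cons] at hedges
  have : s(v, u₁) = s(v, u₂) := List.head_eq_of_cons_eq hedges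
  exact Sym2.congr_right.1 this

end Acyclic

section PickMax

variable {V : Type*}

/-- Pick the endpoint of an unordered pair with the larger key. -/
noncomputable def pickMax (key : V → ℕ) (hkey : Function.Injective key) : Sym2 V → V :=
  Sym2.lift ⟨fun u v => if key u ≤ key v then v else u, by
    intro u v
    dsimp only
    rcases le_or_gt (key u) (key v) with h | h
    · rcases lt_or_eq_of_le h with h' | h'
      · rw [if_pos h, if_neg (not_le.2 h')]
      · obtain rfl : u = v := hkey h'
        simp
    · rw [if_neg (not_le.2 h), if_pos h.le]⟩

lemma pickMax_mk (key : V → ℕ) (hkey : Function.Injective key) (u v : V) :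
    pickMax key hkey s(u, v) = if key u ≤ key v then v else u := rfl

lemma key_le_pickMax (key : V → ℕ) (hkey : Function.Injective key) (u v : V) :
    key u ≤ key (pickMax key hkey s(u, v)) := by
  rw [pickMax_mk]
  split_ifs with h
  · exact h
  · exact le_refl _

lemma pickMax_cases (key : V → ℕ) (hkey : Function.Injective key) {u v : V} (h : u ≠ v) :
    ∃ a b : V, s(u, v) = s(a, b) ∧ pickMax key hkey s(u, v) = b ∧ key a < key b := by
  rw [pickMax_mk]
  rcases le_or_gt (key u) (key v) with hle | hlt
  · refine ⟨u, v, rfl, by rw [if_pos hle], lt_of_le_of_ne hle (fun he => h (hkey he))⟩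
  · exact ⟨v, u, Sym2.eq_swap, by rw [if_neg (not_le.2 hlt)], hlt⟩

end PickMax


section Arith
lemma blockLt {n B₁ B₂ i₁ i₂ : ℕ} (h : B₁ < B₂) (hi : i₁ < n) :
    B₁ * n + i₁ < B₂ * n + i₂ := by nlinarith
lemma blockLe {n B₁ B₂ i₁ i₂ : ℕ} (hi₂ : i₂ < n) (h : B₁ * n + i₁ < B₂ * n + i₂) :
    B₁ ≤ B₂ := by
  by_contra hgt
  push_neg at hgt
  have := blockLt (i₂ := i₁) hgt hi₂; omega
end Arith


section Master

variable {V : Type*} [Fintype V]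

open Classical in
/-- successor in the `key` order, with a top element `Sum.inr 0`. -/
noncomputable def keySucc (key : V → ℕ) (v : V) : V ⊕ Fin 1 :=
  if h : ∃ w : V, key v < key w then
    Sum.inl (Classical.choose
      (Finset.exists_min_image (Finset.univ.filter (fun w => key v < key w)) key
        (by obtain ⟨w, hw⟩ := h; exact ⟨w, by simp [hw]⟩)))
  else Sum.inr 0

lemma keySucc_spec (key : V → ℕ) (v : V) :
    (∃ w : V, keySucc key v = Sum.inl w ∧ key v < key w ∧
        ∀ w' : V, key v < key w' → key w ≤ key w') ∨
      (keySucc key v = Sum.inr 0 ∧ ∀ w : V, ¬ key v < key w) := by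
  unfold keySucc
  split_ifs with h
  · left
    obtain ⟨hw, hmin⟩ := Classical.choose_spec
      (Finset.exists_min_image (Finset.univ.filter (fun w => key v < key w)) key
        (by obtain ⟨w, hw⟩ := h; exact ⟨w, by simp [hw]⟩))
    refine ⟨_, rfl, by simpa using hw, fun w' hw' => hmin w' (by simp [hw'])⟩
  · right
    exact ⟨rfl, by push_neg at h; exact fun w => not_lt.2 (h w)⟩

lemma keySucc_injective (key : V → ℕ) (hkey : Function.Injective key) :
    Function.Injective (keySucc key) := by
  intro v₁ v₂ h
  rcases keySucc_spec key v₁ with ⟨w₁, he₁, hlt₁, hmin₁⟩ | ⟨he₁, hmax₁⟩ <;>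
    rcases keySucc_spec key v₂ with ⟨w₂, he₂, hlt₂, hmin₂⟩ | ⟨he₂, hmax₂⟩
  · rw [he₁, he₂] at h
    obtain rfl : w₁ = w₂ := Sum.inl.inj h
    apply hkey
    rcases lt_trichotomy (key v₁) (key v₂) with hlt | heq | hlt
    · exact absurd (hmin₁ v₂ hlt) (not_le.2 hlt₂)
    · exact heq
    · exact absurd (hmin₂ v₁ hlt) (not_le.2 hlt₁)
  · rw [he₁, he₂] at h; exact absurd h (by simp)
  · rw [he₁, he₂] at h; exact absurd h (by simp)
  · exact hkey (le_antisymm (not_lt.1 (hmax₂ v₁)) (not_lt.1 (hmax₁ v₂)))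

/-- rank function on `V ⊕ Fin 1`. -/
noncomputable def keyRk (key : V → ℕ) : V ⊕ Fin 1 → ℕ :=
  Sum.elim key (fun _ => (Finset.univ.sup key) + 1)

lemma keyRk_lt_keySucc (key : V → ℕ) (v : V) : key v < keyRk key (keySucc key v) := by
  rcases keySucc_spec key v with ⟨w, he, hlt, -⟩ | ⟨he, -⟩
  · rw [he]; exact hlt
  · rw [he]
    exact Nat.lt_succ_of_le (Finset.le_sup (Finset.mem_univ v))

/-- The master lemma: an injective "prey assignment" dominating both endpoints of every
edge yields competition number at most 1. -/
lemma competitionNumber_le_one_of_key (G' : SimpleGraph V)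
    (key : V → ℕ) (hkey : Function.Injective key) (θ : Sym2 V → V)
    (hinj : ∀ f ∈ G'.edgeSet, ∀ g ∈ G'.edgeSet, θ f = θ g → f = g)
    (hdom : ∀ x y, G'.Adj x y → key x ≤ key (θ s(x, y))) :
    competitionNumber G' ≤ 1 := by
  set D : (V ⊕ Fin 1) → (V ⊕ Fin 1) → Prop :=
    fun uu ww => ∃ x y, G'.Adj x y ∧ uu = Sum.inl x ∧ ww = keySucc key (θ s(x, y)) with hD
  have hstep : ∀ uu ww, D uu ww → keyRk key uu < keyRk key ww := by
    rintro uu ww ⟨x, y, hxy, rfl, rfl⟩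
    calc keyRk key (Sum.inl x) = key x := rfl
    _ ≤ key (θ s(x, y)) := hdom x y hxy
    _ < keyRk key (keySucc key (θ s(x, y))) := keyRk_lt_keySucc key _
  have hacyc : DigraphAcyclic D := by
    intro x hx
    have : ∀ uu ww, Relation.TransGen D uu ww → keyRk key uu < keyRk key ww := by
      intro uu ww h
      induction h with
      | single h => exact hstep _ _ h
      | tail _ h ih => exact ih.trans (hstep _ _ h)
    exact lt_irrefl _ (this x x hx)
  have heq : competitionGraph D = G'.addIsolated 1 := by
    ext uu ww
    constructor
    · rintro ⟨hne, v, ⟨x₁, y₁, h₁, rfl, hv₁⟩, ⟨x₂, y₂, h₂, rfl, hv₂⟩⟩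
      have hθ : θ s(x₁, y₁) = θ s(x₂, y₂) :=
        keySucc_injective key hkey (hv₁.symm.trans hv₂)
      have hs : s(x₁, y₁) = s(x₂, y₂) :=
        hinj _ (G'.mem_edgeSet.2 h₁) _ (G'.mem_edgeSet.2 h₂) hθ
      rcases Sym2.eq_iff.1 hs with ⟨h₁', h₂'⟩ | ⟨h₁', h₂'⟩
      · exact absurd (by rw [h₁']) hne
      · exact ⟨x₁, y₁, h₁, rfl, by rw [h₂']⟩
    · rintro ⟨x, y, h, rfl, rfl⟩
      refine ⟨by simpa using h.ne, keySucc key (θ s(x, y)), ⟨x, y, h, rfl, rfl⟩,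
        ⟨y, x, h.symm, rfl, ?_⟩⟩
      rw [Sym2.eq_swap]
  exact Nat.sInf_le ⟨D, hacyc, heq⟩

end Master


section CaseA
variable {V : Type*} [Fintype V]

lemma competitionNumber_le_one_of_tree (G' : SimpleGraph V) (hc : G'.Connected)
    (hac : G'.IsAcyclic) : competitionNumber G' ≤ 1 := by
  classical
  haveI : Nonempty V := hc.nonempty
  obtain ⟨a⟩ := (inferInstance : Nonempty V)
  set n := Fintype.card V with hn
  have hnpos : 0 < n := Fintype.card_pos
  set ι : V → ℕ := fun v => ((Fintype.equivFin V) v : ℕ) with hι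
  have hιlt : ∀ v, ι v < n := fun v => ((Fintype.equivFin V) v).2
  have hιinj : Function.Injective ι := fun u v h =>
    (Fintype.equivFin V).injective (Fin.ext h)
  set key : V → ℕ := fun v => G'.dist a v * n + ι v with hkeydef
  have hkey : Function.Injective key := by
    intro u v h
    apply hιinj
    have h2 : key u % n = key v % n := by rw [h]
    simpa [hkeydef, Nat.mul_add_mod_of_lt (hιlt u), Nat.mul_add_mod_of_lt (hιlt v), Nat.mod_eq_of_lt (hιlt u),
      Nat.mod_eq_of_lt (hιlt v)] using h2
  have hkd : ∀ u v : V, G'.Adj u v → key u < key v → G'.dist a u < G'.dist a v := by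
    intro u v huv hlt
    have hne' := dist_ne_of_adj_of_acyclic hac huv (hc.preconnected a u)
    have hle : G'.dist a u ≤ G'.dist a v := blockLe (hιlt v) hlt
    omega
  apply competitionNumber_le_one_of_key G' key hkey (pickMax key hkey)
  · intro f hf g hg hθ
    induction f using Sym2.ind with | _ u₁ v₁ => ?_
    induction g using Sym2.ind with | _ u₂ v₂ => ?_
    have h₁ : G'.Adj u₁ v₁ := (G'.mem_edgeSet).1 hf
    have h₂ : G'.Adj u₂ v₂ := (G'.mem_edgeSet).1 hg
    obtain ⟨a₁, b₁, hs₁, hpm₁, hlt₁⟩ := pickMax_cases key hkey h₁.ne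
    obtain ⟨a₂, b₂, hs₂, hpm₂, hlt₂⟩ := pickMax_cases key hkey h₂.ne
    rw [hpm₁, hpm₂] at hθ
    subst hθ
    have hadj₁ : G'.Adj a₁ b₁ := (G'.mem_edgeSet).1 (hs₁ ▸ hf)
    have hadj₂ : G'.Adj a₂ b₁ := (G'.mem_edgeSet).1 (hs₂ ▸ hg)
    have hd₁ : G'.dist a a₁ < G'.dist a b₁ := hkd _ _ hadj₁ hlt₁
    have hd₂ : G'.dist a a₂ < G'.dist a b₁ := hkd _ _ hadj₂ hlt₂
    have : a₁ = a₂ := parent_unique_of_acyclic hac hadj₁ hadj₂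
      (hc.preconnected a a₁) (hc.preconnected a a₂) hd₁ hd₂
    rw [hs₁, hs₂, this]
  · intro x y hxy
    exact key_le_pickMax key hkey x y

end CaseA


section CaseB
variable {V : Type*} [Fintype V]

lemma competitionNumber_le_one_of_almostTree (G' F : SimpleGraph V) (a b z : V)
    (hF : F.IsAcyclic) (hab : G'.Adj a b) (hFab : F.Reachable a b)
    (hz : ¬ F.Reachable a z) (hcover : ∀ v, F.Reachable a v ∨ F.Reachable z v)
    (hedge : ∀ u v, G'.Adj u v → F.Adj u v ∨ s(u, v) = s(a, b)) :
    competitionNumber G' ≤ 1 := by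
  classical
  set m := Fintype.card V with hm
  set n := m + 1 with hn
  set ι : V → ℕ := fun v => ((Fintype.equivFin V) v : ℕ) with hι
  have hιlt : ∀ v, ι v < n := fun v => Nat.lt_succ_of_lt ((Fintype.equivFin V) v).2
  have hιinj : Function.Injective ι := fun u v h =>
    (Fintype.equivFin V).injective (Fin.ext h)
  have hdlt : ∀ r v : V, F.Reachable r v → F.dist r v < m := by
    intro r v hr
    obtain ⟨p, hp, hpl⟩ := hr.exists_path_of_dist
    rw [← hpl]
    exact hp.length_lt
  set B : V → ℕ := fun v => if F.Reachable a v then F.dist a v else n + F.dist z v with hB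
  set key : V → ℕ := fun v => B v * n + ι v with hkeydef
  have hkey : Function.Injective key := by
    intro u v h
    apply hιinj
    have h2 : key u % n = key v % n := by rw [h]
    simpa [hkeydef, Nat.mul_add_mod_of_lt (hιlt u), Nat.mul_add_mod_of_lt (hιlt v)] using h2
  have hBz : B z = n := by simp [hB, hz]
  -- the key of any vertex reachable from `a` is smaller than the key of `z`
  have hkeyz : ∀ x, F.Reachable a x → key x < key z := by
    intro x hx
    have hBx : B x = F.dist a x := by simp [hB, hx]
    have : B x < B z := by
      rw [hBx, hBz, hn]
      exact Nat.lt_succ_of_lt (hdlt a x hx)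
    exact blockLt this (hιlt x)
  -- `z` is never the pickMax of a non-special edge
  have hzmax : ∀ g ∈ G'.edgeSet, g ≠ s(a, b) → pickMax key hkey g ≠ z := by
    intro g hg hg'
    induction g using Sym2.ind with | _ u w => ?_
    intro hpz
    have hadj : G'.Adj u w := (G'.mem_edgeSet).1 hg
    obtain ⟨a₂, b₂, hs₂, hpm₂, hlt₂⟩ := pickMax_cases key hkey hadj.ne
    have hb₂ : b₂ = z := hpm₂.symm.trans hpz
    have hadj₂ : G'.Adj a₂ b₂ := (G'.mem_edgeSet).1 (hs₂ ▸ hg)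
    have hF₂ : F.Adj a₂ z := by
      rcases hedge _ _ hadj₂ with h | h
      · exact hb₂ ▸ h
      · exact absurd (hs₂.trans h) hg'
    have hna : ¬ F.Reachable a a₂ := fun hr => hz (hr.trans hF₂.reachable)
    have hdz : 0 < F.dist z a₂ :=
      (hF₂.symm.reachable).pos_dist_of_ne (hF₂.ne.symm)
    have hBlt : B z < B a₂ := by
      rw [hBz]
      simp only [hB, if_neg hna]
      omega
    rw [hb₂] at hlt₂
    exact absurd hlt₂ (not_lt.2 (blockLt hBlt (hιlt z)).le)
  apply competitionNumber_le_one_of_key G' key hkey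
    (fun f => if f = s(a, b) then z else pickMax key hkey f)
  · -- injectivity
    intro f hf g hg hθeq'
    have hθeq : (if f = s(a, b) then z else pickMax key hkey f) =
        (if g = s(a, b) then z else pickMax key hkey g) := hθeq'
    clear hθeq'
    by_cases hf' : f = s(a, b) <;> by_cases hg' : g = s(a, b)
    · rw [hf', hg']
    · rw [if_pos hf', if_neg hg'] at hθeq
      exact absurd hθeq.symm (hzmax g hg hg')
    · rw [if_neg hf', if_pos hg'] at hθeq
      exact absurd hθeq (hzmax f hf hf')
    · rw [if_neg hf', if_neg hg'] at hθeq
      induction f using Sym2.ind with | _ u₁ v₁ => ?_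
      induction g using Sym2.ind with | _ u₂ v₂ => ?_
      have h₁ : G'.Adj u₁ v₁ := (G'.mem_edgeSet).1 hf
      have h₂ : G'.Adj u₂ v₂ := (G'.mem_edgeSet).1 hg
      obtain ⟨a₁, b₁, hs₁, hpm₁, hlt₁⟩ := pickMax_cases key hkey h₁.ne
      obtain ⟨a₂, b₂, hs₂, hpm₂, hlt₂⟩ := pickMax_cases key hkey h₂.ne
      rw [hpm₁, hpm₂] at hθeq
      subst hθeq
      have hadj₁ : G'.Adj a₁ b₁ := (G'.mem_edgeSet).1 (hs₁ ▸ hf)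
      have hadj₂ : G'.Adj a₂ b₁ := (G'.mem_edgeSet).1 (hs₂ ▸ hg)
      have hFadj₁ : F.Adj a₁ b₁ := by
        rcases hedge _ _ hadj₁ with h | h
        · exact h
        · exact absurd (hs₁.trans h) hf'
      have hFadj₂ : F.Adj a₂ b₁ := by
        rcases hedge _ _ hadj₂ with h | h
        · exact h
        · exact absurd (hs₂.trans h) hg'
      have main : a₁ = a₂ := by
        by_cases hra : F.Reachable a b₁
        · have hr₁ : F.Reachable a a₁ := hra.trans hFadj₁.symm.reachable
          have hr₂ : F.Reachable a a₂ := hra.trans hFadj₂.symm.reachable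
          have hBm : B b₁ = F.dist a b₁ := by simp [hB, hra]
          have hB₁ : B a₁ = F.dist a a₁ := by simp [hB, hr₁]
          have hB₂ : B a₂ = F.dist a a₂ := by simp [hB, hr₂]
          have hle₁ : F.dist a a₁ ≤ F.dist a b₁ := by
            have := blockLe (hιlt b₁) hlt₁; rwa [hB₁, hBm] at this
          have hle₂ : F.dist a a₂ ≤ F.dist a b₁ := by
            have := blockLe (hιlt b₁) hlt₂; rwa [hB₂, hBm] at this
          have hne₁ := dist_ne_of_adj_of_acyclic hF hFadj₁ hr₁
          have hne₂ := dist_ne_of_adj_of_acyclic hF hFadj₂ hr₂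
          exact parent_unique_of_acyclic hF hFadj₁ hFadj₂ hr₁ hr₂
            (by omega) (by omega)
        · have hrm : F.Reachable z b₁ := (hcover b₁).resolve_left hra
          have hr₁ : F.Reachable z a₁ := hrm.trans hFadj₁.symm.reachable
          have hr₂ : F.Reachable z a₂ := hrm.trans hFadj₂.symm.reachable
          have hna₁ : ¬ F.Reachable a a₁ := fun h => hra (h.trans hFadj₁.reachable)
          have hna₂ : ¬ F.Reachable a a₂ := fun h => hra (h.trans hFadj₂.reachable)
          have hBm : B b₁ = n + F.dist z b₁ := by simp [hB, hra]
          have hB₁ : B a₁ = n + F.dist z a₁ := by simp [hB, hna₁]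
          have hB₂ : B a₂ = n + F.dist z a₂ := by simp [hB, hna₂]
          have hle₁ : F.dist z a₁ ≤ F.dist z b₁ := by
            have := blockLe (hιlt b₁) hlt₁; rw [hB₁, hBm] at this; omega
          have hle₂ : F.dist z a₂ ≤ F.dist z b₁ := by
            have := blockLe (hιlt b₁) hlt₂; rw [hB₂, hBm] at this; omega
          have hne₁ := dist_ne_of_adj_of_acyclic hF hFadj₁ hr₁
          have hne₂ := dist_ne_of_adj_of_acyclic hF hFadj₂ hr₂
          exact parent_unique_of_acyclic hF hFadj₁ hFadj₂ hr₁ hr₂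
            (by omega) (by omega)
      rw [hs₁, hs₂, main]
  · -- domination
    intro x y hxy
    show key x ≤ key (if s(x, y) = s(a, b) then z else pickMax key hkey s(x, y))
    by_cases hfab : s(x, y) = s(a, b)
    · rw [if_pos hfab]
      have hx : x = a ∨ x = b := by
        rcases Sym2.eq_iff.1 hfab with ⟨h1, h2⟩ | ⟨h1, h2⟩
        · exact Or.inl h1
        · exact Or.inr h1
      have hrax : F.Reachable a x := by
        rcases hx with h | h
        · rw [h]
        · rw [h]; exact hFab
      exact (hkeyz x hrax).le
    · rw [if_neg hfab]
      exact key_le_pickMax key hkey x y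

end CaseB


section GraphTheory
variable {V : Type*} {G : SimpleGraph V}

lemma edges_of_length_one {u v : V} {p : G.Walk u v} (h : p.length = 1) :
    p.edges = [s(u, v)] := by
  cases p with
  | nil => simp at h
  | cons h' q =>
    cases q with
    | nil => simp
    | cons h'' r => simp [SimpleGraph.Walk.length_cons] at h

/-- every cycle in a triangle-free graph has length at least 4 -/
lemma four_le_cycle_length (htf : G.CliqueFree 3) {w : V} (c : G.Walk w w)
    (hc : c.IsCycle) : 4 ≤ c.length := by
  have h3 := hc.three_le_length
  rcases Nat.lt_or_ge c.length 4 with h4 | h4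
  · have h3' : c.length = 3 := by omega
    exfalso
    obtain ⟨s, hs⟩ := (SimpleGraph.is3Clique_iff_exists_cycle_length_three (G := G)).2 ⟨w, c, hc, h3'⟩
    exact htf s hs
  · exact h4

/-- Splitting a cycle along a chord into two shorter cycles. -/
lemma cycle_split [DecidableEq V] {w x y : V} (c : G.Walk w w) (hc : c.IsCycle)
    (hx : x ∈ c.support) (hy : y ∈ c.support) (hadj : G.Adj x y)
    (hchord : s(x, y) ∉ c.edges) :
    ∃ (c₁ : G.Walk x x) (c₂ : G.Walk y y), c₁.IsCycle ∧ c₂.IsCycle ∧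
      s(x, y) ∈ c₁.edges ∧ s(x, y) ∈ c₂.edges ∧
      c₁.length < c.length ∧ c₂.length < c.length ∧
      (∀ f ∈ c.edges, f ∈ c₁.edges ∨ f ∈ c₂.edges) := by
  have hxy : x ≠ y := hadj.ne
  set c' := c.rotate x hx with hc'def
  have hc' : c'.IsCycle := hc.rotate hx
  have hrot := c.rotate_edges x hx
  rw [← hc'def] at hrot
  have hlenc : c'.length = c.length := by
    rw [← SimpleGraph.Walk.length_edges, ← SimpleGraph.Walk.length_edges]
    exact hrot.perm.length_eq
  -- y is in the tail of the support of c
  have hytail : y ∈ c.support.tail := by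
    cases c with
    | nil => exact absurd rfl hc.ne_nil
    | cons h q =>
      rcases (SimpleGraph.Walk.mem_support_iff _).1 hy with h' | h'
      · rw [h']
        simpa using q.end_mem_support
      · simpa using h'
  have hy' : y ∈ c'.support := by
    rw [c'.support_eq_cons]
    exact List.mem_cons_of_mem _ (((c.support_rotate x hx).mem_iff).2 hytail)
  set p := c'.takeUntil y hy' with hpdef
  set q := c'.dropUntil y hy' with hqdef
  have hspec : p.append q = c' := c'.take_spec hy'
  have hsupp : c'.support.tail = p.support.tail ++ q.support.tail := by
    conv_lhs => rw [← hspec]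
    rw [SimpleGraph.Walk.support_append, p.support_eq_cons]
    simp
  have hnodup : (p.support.tail ++ q.support.tail).Nodup := by
    rw [← hsupp]; exact hc'.support_nodup
  have hdisj : List.Disjoint p.support.tail q.support.tail :=
    List.disjoint_of_nodup_append hnodup
  have hyp : y ∈ p.support.tail := SimpleGraph.Walk.end_mem_tail_support_of_ne hxy p
  have hxq : x ∈ q.support.tail := SimpleGraph.Walk.end_mem_tail_support_of_ne hxy.symm q
  have hppath : p.IsPath := by
    apply SimpleGraph.Walk.IsPath.mk'
    rw [p.support_eq_cons]
    exact List.nodup_cons.2 ⟨fun hmem => hdisj hmem hxq, hnodup.of_append_left⟩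
  have hqpath : q.IsPath := by
    apply SimpleGraph.Walk.IsPath.mk'
    rw [q.support_eq_cons]
    exact List.nodup_cons.2 ⟨fun hmem => hdisj hyp hmem, hnodup.of_append_right⟩
  have hpq : p.length + q.length = c.length := by
    have := congrArg SimpleGraph.Walk.length hspec
    rw [SimpleGraph.Walk.length_append] at this
    omega
  have hcup : ∀ f : Sym2 V, f ∈ p.edges ∨ f ∈ q.edges → f ∈ c.edges := by
    intro f hf
    apply hrot.mem_iff.1
    rw [← hspec, SimpleGraph.Walk.edges_append, List.mem_append]
    exact hf
  have hpe : s(x, y) ∉ p.edges := fun hmem => hchord (hcup _ (Or.inl hmem))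
  have hqe : s(x, y) ∉ q.edges := fun hmem => hchord (hcup _ (Or.inr hmem))
  have hp1 : 1 ≤ p.length := walk_length_pos p hxy
  have hq1 : 1 ≤ q.length := walk_length_pos q hxy.symm
  have hp2 : 2 ≤ p.length := by
    rcases Nat.lt_or_ge p.length 2 with h | h
    · have := edges_of_length_one (p := p) (by omega)
      exact absurd (this ▸ List.mem_singleton_self _) hpe
    · exact h
  have hq2 : 2 ≤ q.length := by
    rcases Nat.lt_or_ge q.length 2 with h | h
    · have h1 : q.edges = [s(y, x)] := edges_of_length_one (by omega)
      refine absurd ?_ hqe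
      rw [h1, Sym2.eq_swap]
      exact List.mem_singleton_self _
    · exact h
  refine ⟨SimpleGraph.Walk.cons hadj q, SimpleGraph.Walk.cons hadj.symm p, ?_, ?_, ?_, ?_, ?_, ?_, ?_⟩
  · exact (SimpleGraph.Walk.cons_isCycle_iff q hadj).2 ⟨hqpath, hqe⟩
  · refine (SimpleGraph.Walk.cons_isCycle_iff p hadj.symm).2 ⟨hppath, ?_⟩
    rw [Sym2.eq_swap]
    exact hpe
  · simp
  · rw [SimpleGraph.Walk.edges_cons, Sym2.eq_swap]
    exact List.mem_cons_self
  · rw [SimpleGraph.Walk.length_cons]; omega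
  · rw [SimpleGraph.Walk.length_cons]; omega
  · intro f hf
    have : f ∈ (p.append q).edges := by rw [hspec]; exact hrot.mem_iff.2 hf
    rw [SimpleGraph.Walk.edges_append, List.mem_append] at this
    rcases this with h | h
    · right
      rw [SimpleGraph.Walk.edges_cons]
      exact List.mem_cons_of_mem _ h
    · left
      rw [SimpleGraph.Walk.edges_cons]
      exact List.mem_cons_of_mem _ h

/-- Reachability-closed predicates propagate along walks. -/
lemma reach_ind {H : SimpleGraph V} (P : V → Prop)
    (hstep : ∀ u v, H.Adj u v → P u → P v) {u v : V} (h : H.Reachable u v) (hu : P u) :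
    P v := by
  obtain ⟨w⟩ := h
  induction w with
  | nil => exact hu
  | cons h' q ih => exact ih (hstep _ _ h' hu)

end GraphTheory


section Claim1
variable {V : Type*} {G : SimpleGraph V}

/-- If all holes of `G` have the same edge set as `cH`, then in a triangle-free graph
every cycle has the same edge set as `cH`. -/
lemma all_cycles_eq_hole (htf : G.CliqueFree 3) {u : V} (cH : G.Walk u u)
    (hHc : cH.IsCycle)
    (huniq : ∀ ⦃w : V⦄ (c' : G.Walk w w), G.IsHole c' → ∀ f, f ∈ c'.edges ↔ f ∈ cH.edges) :
    ∀ (N : ℕ) ⦃w : V⦄ (c : G.Walk w w), c.IsCycle → c.length ≤ N →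
      ∀ f, f ∈ c.edges ↔ f ∈ cH.edges := by
  classical
  intro N
  induction N with
  | zero =>
    intro w c hc hlen f
    exact absurd hc.three_le_length (by omega)
  | succ N ih =>
    intro w c hc hlen f
    by_cases hchordless : ∀ p q, p ∈ c.support → q ∈ c.support → G.Adj p q →
        s(p, q) ∈ c.edges
    · exact huniq c ⟨hc, four_le_cycle_length htf c hc, hchordless⟩ f
    · exfalso
      push_neg at hchordless
      obtain ⟨p, q, hp, hq, hadj, hchord⟩ := hchordless
      obtain ⟨c₁, c₂, hc₁, hc₂, he₁, he₂, hl₁, hl₂, hcov⟩ :=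
        cycle_split c hc hp hq hadj hchord
      have hE₁ : ∀ g, g ∈ c₁.edges ↔ g ∈ cH.edges := ih c₁ hc₁ (by omega)
      have hE₂ : ∀ g, g ∈ c₂.edges ↔ g ∈ cH.edges := ih c₂ hc₂ (by omega)
      have hch : s(p, q) ∈ cH.edges := (hE₁ _).1 he₁
      have hsub : c.edges ⊆ cH.edges.erase s(p, q) := by
        intro g hg
        have hgH : g ∈ cH.edges := by
          rcases hcov g hg with h | h
          · exact (hE₁ g).1 h
          · exact (hE₂ g).1 h
        refine (List.mem_erase_of_ne (fun hgg : g = s(p, q) => hchord (hgg ▸ hg))).2 hgH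
      have hnd : c.edges.Nodup := hc.isCircuit.isTrail.edges_nodup
      have hlen1 : c.edges.length ≤ (cH.edges.erase s(p, q)).length :=
        (List.subperm_of_subset hnd hsub).length_le
      rw [List.length_erase_of_mem hch] at hlen1
      have hndH : cH.edges.Nodup := hHc.isCircuit.isTrail.edges_nodup
      have hsub2 : cH.edges ⊆ c₁.edges := fun g hg => (hE₁ g).2 hg
      have hlen2 : cH.edges.length ≤ c₁.edges.length :=
        (List.subperm_of_subset hndH hsub2).length_le
      simp only [SimpleGraph.Walk.length_edges] at hlen1 hlen2
      have h3 := hHc.three_le_length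
      omega

end Claim1


/-- If `G` is a connected triangle-free graph with exactly one hole `H`,
then `k(G - e) ≤ 1` for every edge `e` of `G`. -/
theorem competitionNumber_deleteEdge_le_one_of_unique_hole
    {V : Type*} [Fintype V] (G : SimpleGraph V) (hconn : G.Connected)
    (htf : G.CliqueFree 3)
    {u : V} (cH : G.Walk u u) (hHole : G.IsHole cH)
    (hh : G.holeEdgeSets.ncard = 1)
    (e : Sym2 V) (he : e ∈ G.edgeSet) :
    competitionNumber (G.deleteEdges {e}) ≤ 1 := by
  classical
  obtain ⟨hHc, hHlen, hHchordless⟩ := hHole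
  have huniq : ∀ ⦃w : V⦄ (c' : G.Walk w w), G.IsHole c' →
      ∀ f, f ∈ c'.edges ↔ f ∈ cH.edges := by
    intro w c' hc' f
    obtain ⟨E₀, hE₀⟩ := Set.ncard_eq_one.1 hh
    have h1 : {g | g ∈ c'.edges} ∈ G.holeEdgeSets := ⟨w, c', hc', rfl⟩
    have h2 : {g | g ∈ cH.edges} ∈ G.holeEdgeSets := ⟨u, cH, ⟨hHc, hHlen, hHchordless⟩, rfl⟩
    rw [hE₀, Set.mem_singleton_iff] at h1 h2
    have h3 : {g | g ∈ c'.edges} = {g | g ∈ cH.edges} := h1.trans h2.symm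
    exact Set.ext_iff.1 h3 f
  have hcyceq : ∀ ⦃w : V⦄ (c : G.Walk w w), c.IsCycle →
      ∀ f, f ∈ c.edges ↔ f ∈ cH.edges :=
    fun w c hc f => all_cycles_eq_hole htf cH hHc huniq c.length c hc le_rfl f
  revert he
  induction e using Sym2.ind with | _ x y => ?_
  intro he
  have hxy : G.Adj x y := (G.mem_edgeSet).1 he
  have hle : G.deleteEdges {s(x, y)} ≤ G := G.deleteEdges_le _
  -- acyclicity transfer helper
  have hacyhelp : ∀ (s : Set (Sym2 V)), (∃ f ∈ cH.edges, f ∈ s) →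
      (G.deleteEdges s).IsAcyclic := by
    intro s hs w c hc
    obtain ⟨f, hfH, hfs⟩ := hs
    have hsubG : ∀ g ∈ c.edges, g ∈ G.edgeSet := by
      intro g hg
      have := c.edges_subset_edgeSet hg
      rw [SimpleGraph.edgeSet_deleteEdges] at this
      exact this.1
    have hcG : (c.transfer G hsubG).IsCycle := hc.transfer hsubG
    have hemem : f ∈ (c.transfer G hsubG).edges := (hcyceq _ hcG f).2 hfH
    have hEq : (c.transfer G hsubG).edges = c.edges := SimpleGraph.Walk.edges_transfer _ _
    have hfc : f ∈ c.edges := hEq ▸ hemem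
    have hsubE := c.edges_subset_edgeSet hfc
    rw [SimpleGraph.edgeSet_deleteEdges] at hsubE
    exact hsubE.2 hfs
  by_cases hcase : s(x, y) ∈ cH.edges
  · -- Case A : G - e is a tree
    have hacy : (G.deleteEdges {s(x, y)}).IsAcyclic :=
      hacyhelp _ ⟨s(x, y), hcase, rfl⟩
    have hbr := (SimpleGraph.adj_and_reachable_delete_edges_iff_exists_cycle
      (G := G) (v := x) (w := y)).2 ⟨u, cH, hHc, hcase⟩
    have hreach : (G.deleteEdges {s(x, y)}).Reachable x y := hbr.2
    have hconn' : (G.deleteEdges {s(x, y)}).Connected := by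
      haveI : Nonempty V := hconn.nonempty
      refine ⟨fun sv tv => ?_⟩
      refine reach_ind (fun v => (G.deleteEdges {s(x, y)}).Reachable sv v) ?_
        (hconn.preconnected sv tv) (SimpleGraph.Reachable.refl sv)
      intro p q hpq hsp
      apply hsp.trans
      by_cases hpe : s(p, q) = s(x, y)
      · rcases Sym2.eq_iff.1 hpe with ⟨h1, h2⟩ | ⟨h1, h2⟩
        · rw [h1, h2]; exact hreach
        · rw [h1, h2]; exact hreach.symm
      · exact SimpleGraph.Adj.reachable
          (by rw [SimpleGraph.deleteEdges_adj]; exact ⟨hpq, by simpa using hpe⟩)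
    exact competitionNumber_le_one_of_tree _ hconn' hacy
  · -- Case B
    have hdne : cH.darts ≠ [] := by
      intro h0
      have hld := cH.length_darts
      rw [h0] at hld
      simp at hld
      omega
    obtain ⟨d, hd⟩ := List.exists_mem_of_ne_nil _ hdne
    set a := d.toProd.1 with hadef
    set b := d.toProd.2 with hbdef
    have hdadj : G.Adj a b := d.adj
    have hdedge : s(a, b) ∈ cH.edges := by
      have h1 : d.edge ∈ cH.edges := List.mem_map_of_mem hd
      exact h1
    have hsne : s(x, y) ≠ s(a, b) := fun h => hcase (h ▸ hdedge)
    set G' := G.deleteEdges {s(x, y)} with hG'def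
    set F := G.deleteEdges {s(x, y), s(a, b)} with hFdef
    have hFle : F ≤ G' := by
      intro p q hpq
      rw [SimpleGraph.deleteEdges_adj] at hpq ⊢
      refine ⟨hpq.1, ?_⟩
      have := hpq.2
      simp only [Set.mem_insert_iff, Set.mem_singleton_iff] at this ⊢
      tauto
    have hFleG : F ≤ G := G.deleteEdges_le _
    have hFacy : F.IsAcyclic := hacyhelp _ ⟨s(a, b), hdedge, by simp⟩
    have hedge : ∀ p q, G'.Adj p q → F.Adj p q ∨ s(p, q) = s(a, b) := by
      intro p q h
      by_cases hh' : s(p, q) = s(a, b)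
      · exact Or.inr hh'
      · left
        rw [SimpleGraph.deleteEdges_adj] at h ⊢
        refine ⟨h.1, ?_⟩
        have := h.2
        simp only [Set.mem_insert_iff, Set.mem_singleton_iff] at this ⊢
        tauto
    have hHsub : ∀ f ∈ cH.edges, f ∈ G'.edgeSet := by
      intro f hf
      rw [hG'def, SimpleGraph.edgeSet_deleteEdges]
      exact ⟨cH.edges_subset_edgeSet hf, by
        simp only [Set.mem_singleton_iff]
        exact fun h => hcase (h ▸ hf)⟩
    have hcH' : (cH.transfer G' hHsub).IsCycle := hHc.transfer hHsub
    have hedgecH' : s(a, b) ∈ (cH.transfer G' hHsub).edges := by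
      rw [SimpleGraph.Walk.edges_transfer]; exact hdedge
    have hFab : F.Reachable a b := by
      have h2 := (SimpleGraph.adj_and_reachable_delete_edges_iff_exists_cycle
        (G := G') (v := a) (w := b)).2 ⟨u, cH.transfer G' hHsub, hcH', hedgecH'⟩
      have h3 : (G'.deleteEdges {s(a, b)}).Reachable a b := h2.2
      have hGeq : G'.deleteEdges {s(a, b)} = F := by
        ext p q
        rw [SimpleGraph.deleteEdges_adj, SimpleGraph.deleteEdges_adj,
          SimpleGraph.deleteEdges_adj]
        simp only [Set.mem_insert_iff, Set.mem_singleton_iff]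
        tauto
      rwa [hGeq] at h3
    have hnxy : ¬ F.Reachable x y := by
      intro hr
      obtain ⟨pw⟩ := hr
      have hsubG : ∀ g ∈ pw.bypass.edges, g ∈ G.edgeSet := by
        intro g hg
        have := pw.bypass.edges_subset_edgeSet hg
        rw [SimpleGraph.edgeSet_deleteEdges] at this
        exact this.1
      have hcyc2 : (SimpleGraph.Walk.cons hxy.symm (pw.bypass.transfer G hsubG)).IsCycle := by
        rw [SimpleGraph.Walk.cons_isCycle_iff]
        refine ⟨SimpleGraph.Walk.IsPath.transfer hsubG pw.bypass_isPath, ?_⟩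
        intro hmem
        have hEq : (pw.bypass.transfer G hsubG).edges = pw.bypass.edges :=
          SimpleGraph.Walk.edges_transfer _ _
        rw [hEq] at hmem
        have := pw.bypass.edges_subset_edgeSet hmem
        rw [hFdef, SimpleGraph.edgeSet_deleteEdges] at this
        exact this.2 (by rw [Sym2.eq_swap]; simp)
      have hx' : s(x, y) ∈ (SimpleGraph.Walk.cons hxy.symm (pw.bypass.transfer G hsubG)).edges := by
        rw [SimpleGraph.Walk.edges_cons, Sym2.eq_swap]
        exact List.mem_cons_self
      exact hcase ((hcyceq _ hcyc2 s(x, y)).1 hx')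
    have hTab : (G.deleteEdges {s(a, b)}).Reachable a b :=
      ((SimpleGraph.adj_and_reachable_delete_edges_iff_exists_cycle
        (G := G) (v := a) (w := b)).2 ⟨u, cH, hHc, hdedge⟩).2
    have hTall : ∀ v, (G.deleteEdges {s(a, b)}).Reachable x v := by
      intro v
      refine reach_ind (fun t => (G.deleteEdges {s(a, b)}).Reachable x t) ?_
        (hconn.preconnected x v) (SimpleGraph.Reachable.refl x)
      intro p q hpq hsp
      apply hsp.trans
      by_cases hpe : s(p, q) = s(a, b)
      · rcases Sym2.eq_iff.1 hpe with ⟨h1, h2⟩ | ⟨h1, h2⟩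
        · rw [h1, h2]; exact hTab
        · rw [h1, h2]; exact hTab.symm
      · exact SimpleGraph.Adj.reachable
          (by rw [SimpleGraph.deleteEdges_adj]; exact ⟨hpq, by simpa using hpe⟩)
    have hSxy : ∀ v, F.Reachable x v ∨ F.Reachable y v := by
      intro v
      refine reach_ind (fun t => F.Reachable x t ∨ F.Reachable y t) ?_ (hTall v)
        (Or.inl (SimpleGraph.Reachable.refl x))
      intro p q hpq hsp
      by_cases hpe : s(p, q) = s(x, y)
      · rcases Sym2.eq_iff.1 hpe with ⟨h1, h2⟩ | ⟨h1, h2⟩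
        · right; rw [← h2]
        · left; rw [← h2]
      · have hFpq : F.Adj p q := by
          rw [SimpleGraph.deleteEdges_adj] at hpq ⊢
          refine ⟨hpq.1, ?_⟩
          have := hpq.2
          simp only [Set.mem_insert_iff, Set.mem_singleton_iff] at this ⊢
          tauto
        rcases hsp with h | h
        · exact Or.inl (h.trans hFpq.reachable)
        · exact Or.inr (h.trans hFpq.reachable)
    have hG'ab : G'.Adj a b := by
      rw [SimpleGraph.deleteEdges_adj]
      exact ⟨hdadj, by simpa using hsne.symm⟩
    by_cases hax : F.Reachable a x
    · have hzy : ¬ F.Reachable a y := fun h => hnxy (hax.symm.trans h)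
      have hcov : ∀ v, F.Reachable a v ∨ F.Reachable y v := by
        intro v
        rcases hSxy v with h | h
        · exact Or.inl (hax.trans h)
        · exact Or.inr h
      exact competitionNumber_le_one_of_almostTree G' F a b y hFacy hG'ab hFab hzy hcov hedge
    · have hcov : ∀ v, F.Reachable a v ∨ F.Reachable x v := by
        intro v
        have hya : F.Reachable y a := by
          rcases hSxy a with h | h
          · exact absurd h.symm hax
          · exact h
        rcases hSxy v with h | h
        · exact Or.inr h
        · exact Or.inl (hya.symm.trans h)
      exact competitionNumber_le_one_of_almostTree G' F a b x hFacy hG'ab hFab hax hcov hedge
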